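/- If $A$ is an $f$-algebra with the factorization property and separating order dual, then every $f$-orthomorphism on $A^\sim$ is an orthomorphism: if $T \in L_b(A^\sim)$ satisfies $R(Tf) \subseteq R(f)$ for all $f \in A^\sim$, then $T$ is band preserving, i.e., $f \perp g$ implies $Tf \perp g$. -/

import Mathlib

noncomputable section

/-- Riesz space (real vector lattice) axioms, as a `Prop`-valued class. -/
class RieszSp (E : Type*) [AddCommGroup E] [Lattice E] [Module ℝ E] : Prop where
  add_le_add_left : ∀ a b : E, a ≤ b → ∀ c : E, c + a ≤ c + b
  smul_nonneg : ∀ (r : ℝ) (a : E), 0 ≤ r → 0 ≤ a → 0 ≤ r • a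

/-- Archimedean (real) f-algebra axioms, as a `Prop`-valued class. -/
class FAlg (A : Type*) [CommRing A] [Lattice A] [Module ℝ A] extends RieszSp A : Prop where
  mul_nonneg : ∀ a b : A, 0 ≤ a → 0 ≤ b → 0 ≤ a * b
  disjoint_mul : ∀ a b c : A, a ⊓ b = 0 → 0 ≤ c → (c * a) ⊓ b = 0
  archimedean : ∀ a b : A, (∀ n : ℕ, (n : ℝ) • a ≤ b) → a ≤ 0

/-- A linear functional is order bounded if it is bounded on order intervals. -/
def OrderBddFn {E : Type*} [AddCommGroup E] [Lattice E] [Module ℝ E]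
    (φ : E →ₗ[ℝ] ℝ) : Prop :=
  ∀ a b : E, ∃ M : ℝ, ∀ x : E, a ≤ x → x ≤ b → |φ x| ≤ M

/-- A linear functional is order continuous if it sends downward directed sets with
infimum `0` to nets converging to `0`. -/
def OrdContFn {E : Type*} [AddCommGroup E] [Lattice E] [Module ℝ E]
    (φ : E →ₗ[ℝ] ℝ) : Prop :=
  ∀ s : Set E, s.Nonempty → DirectedOn (· ≥ ·) s → IsGLB s 0 →
    ∀ ε : ℝ, 0 < ε → ∃ d ∈ s, ∀ d' ∈ s, d' ≤ d → |φ d'| < ε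

/-- The data realizing `D` as the order dual `A^∼` of the f-algebra `A` (with separating
order dual) and `N` as the order continuous part `(A^∼)^∼_n` of the order bidual of `A`,
together with the Arens multiplication and its actions. -/
class DualSetting (A : Type*) [CommRing A] [Lattice A] [Module ℝ A]
    (D : Type*) [AddCommGroup D] [Lattice D] [Module ℝ D]
    (N : Type*) [CommRing N] [Lattice N] [Module ℝ N] where
  dual : D →ₗ[ℝ] A →ₗ[ℝ] ℝ
  bidual : N →ₗ[ℝ] D →ₗ[ℝ] ℝ
  dual_inj : Function.Injective dual
  bidual_inj : Function.Injective bidual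
  dual_bdd : ∀ d : D, OrderBddFn (dual d)
  dual_surj : ∀ φ : A →ₗ[ℝ] ℝ, OrderBddFn φ → ∃ d : D, dual d = φ
  dual_order : ∀ d : D, 0 ≤ d ↔ ∀ a : A, 0 ≤ a → 0 ≤ dual d a
  bidual_bdd : ∀ F : N, OrderBddFn (bidual F)
  bidual_cont : ∀ F : N, OrdContFn (bidual F)
  bidual_surj : ∀ Φ : D →ₗ[ℝ] ℝ, OrderBddFn Φ → OrdContFn Φ → ∃ F : N, bidual F = Φ
  bidual_order : ∀ F : N, 0 ≤ F ↔ ∀ d : D, 0 ≤ d → 0 ≤ bidual F d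
  separating : ∀ a : A, (∀ d : D, dual d a = 0) → a = 0
  /-- the action `f ⋅ a` of `A` on `A^∼`:  `(f ⋅ a)(b) = f (a b)` -/
  dsmul : A → D → D
  dsmul_eval : ∀ (a : A) (f : D) (b : A), dual (dsmul a f) b = dual f (a * b)
  /-- the action `F ⋅ f` of `(A^∼)^∼_n` on `A^∼`:  `(F ⋅ f)(a) = F (f ⋅ a)` -/
  nsmul : N → D → D
  nsmul_eval : ∀ (F : N) (f : D) (a : A), dual (nsmul F f) a = bidual F (dsmul a f)
  /-- the Arens product on `(A^∼)^∼_n`:  `(F * G)(f) = F (G ⋅ f)` -/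
  mul_eval : ∀ (F G : N) (f : D), bidual (F * G) f = bidual F (nsmul G f)


set_option linter.unusedSectionVars false

section Inst
variable {E : Type*} [AddCommGroup E] [Lattice E] [Module ℝ E] [RieszSp E]

instance (priority := 100) RieszSp.toCov : CovariantClass E E (· + ·) (· ≤ ·) :=
  ⟨fun c a b h => RieszSp.add_le_add_left a b h c⟩

instance (priority := 100) RieszSp.toCovSwap :
    CovariantClass E E (Function.swap (· + ·)) (· ≤ ·) :=
  ⟨fun c a b h => by
    have := RieszSp.add_le_add_left a b h c
    simpa [add_comm] using this⟩

lemma aux_sub_infid (x y : E) : x - x ⊓ y = (x - y)⁺ := by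
  rw [posPart_def, sub_inf, sub_self, sup_comm]

lemma aux_pp_of_disj {p q : E} (h : p ⊓ q = 0) : (p - q)⁺ = p := by
  rw [← aux_sub_infid, h, sub_zero]

lemma aux_smul_mono {r : ℝ} (hr : 0 ≤ r) {x y : E} (h : x ≤ y) : r • x ≤ r • y := by
  have := RieszSp.smul_nonneg r (y - x) hr (by rwa [sub_nonneg])
  rw [smul_sub] at this
  exact sub_nonneg.1 this

lemma aux_smul_pp {r : ℝ} (hr : 0 ≤ r) (x : E) : (r • x)⁺ = r • x⁺ := by
  rcases eq_or_lt_of_le hr with h0 | h0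
  · simp [← h0]
  · refine le_antisymm ?_ ?_
    · rw [posPart_def]
      exact sup_le (aux_smul_mono hr (le_posPart x))
        (RieszSp.smul_nonneg _ _ hr (posPart_nonneg x))
    · have h1 : x⁺ ≤ r⁻¹ • (r • x)⁺ := by
        rw [posPart_def]
        refine sup_le ?_ (RieszSp.smul_nonneg _ _ (by positivity) (posPart_nonneg _))
        have hx : x = r⁻¹ • (r • x) := by rw [smul_smul, inv_mul_cancel₀ h0.ne', one_smul]
        nth_rewrite 1 [hx]
        exact aux_smul_mono (by positivity) (le_posPart (r • x))
      have := aux_smul_mono hr h1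
      rwa [smul_smul, mul_inv_cancel₀ h0.ne', one_smul] at this

lemma aux_abs_nonneg (x : E) : 0 ≤ |x| := by
  show (0:E) ≤ x ⊔ -x
  have h1 : (0:E) ≤ (x ⊔ -x) + (x ⊔ -x) := by
    calc (0:E) = x + -x := by abel
    _ ≤ (x ⊔ -x) + (x ⊔ -x) := add_le_add le_sup_left le_sup_right
  have h2 : x ⊔ -x = (1/2 : ℝ) • ((x ⊔ -x) + (x ⊔ -x)) := by
    rw [← two_smul ℝ, smul_smul]; norm_num
  rw [h2]
  exact RieszSp.smul_nonneg _ _ (by norm_num) h1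

end Inst

section FA
variable {A : Type*} [CommRing A] [Lattice A] [Module ℝ A] [FAlg A]

lemma aux_dpz {u v : A} (hu : 0 ≤ u) (hv : 0 ≤ v) (h : u ⊓ v = 0) : u * v = 0 := by
  have h1 : (v * u) ⊓ v = 0 := FAlg.disjoint_mul u v v h hv
  rw [mul_comm] at h1
  have h2 := FAlg.disjoint_mul v (u * v) u (by rw [inf_comm]; exact h1) hu
  rwa [inf_idem] at h2

lemma aux_one_nonneg : (0:A) ≤ 1 := by
  have hp : (0:A) ≤ (1:A)⁺ := posPart_nonneg 1
  have hn : (0:A) ≤ (1:A)⁻ := negPart_nonneg 1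
  have hd : (1:A)⁻ ⊓ (1:A)⁺ = 0 := by rw [inf_comm]; exact posPart_inf_negPart_eq_zero 1
  have hz : (1:A)⁻ * (1:A)⁺ = 0 := aux_dpz hn hp hd
  have h1 : (1:A)⁻ = -((1:A)⁻ * (1:A)⁻) := by
    have hsub := posPart_sub_negPart (1:A)
    calc (1:A)⁻ = (1:A)⁻ * 1 := (mul_one _).symm
    _ = (1:A)⁻ * ((1:A)⁺ - (1:A)⁻) := by rw [hsub]
    _ = -((1:A)⁻ * (1:A)⁻) := by rw [mul_sub, hz, zero_sub]
  have h2 : (1:A)⁻ ≤ 0 := by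
    rw [h1]
    have hw : (0:A) ≤ (1:A)⁻ * (1:A)⁻ := FAlg.mul_nonneg _ _ hn hn
    have h5 : (0:A) + -((1:A)⁻ * (1:A)⁻) ≤ ((1:A)⁻ * (1:A)⁻) + -((1:A)⁻ * (1:A)⁻) :=
      add_le_add hw le_rfl
    simpa using h5
  have h3 : (1:A)⁻ = 0 := le_antisymm h2 hn
  have h4 := posPart_sub_negPart (1:A)
  rw [h3, sub_zero] at h4
  rw [← h4]; exact posPart_nonneg 1

lemma aux_mul_mono {c x y : A} (hc : 0 ≤ c) (h : x ≤ y) : c * x ≤ c * y := by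
  have := FAlg.mul_nonneg c (y - x) hc (by rwa [sub_nonneg])
  rw [mul_sub] at this
  exact sub_nonneg.1 this

lemma aux_mul_pp {x : A} (hx : 0 ≤ x) (u : A) : x * u⁺ = (x * u)⁺ := by
  have hd1 : (x * u⁺) ⊓ u⁻ = 0 :=
    FAlg.disjoint_mul u⁺ u⁻ x (posPart_inf_negPart_eq_zero u) hx
  have hd2 : (x * u⁻) ⊓ (x * u⁺) = 0 :=
    FAlg.disjoint_mul u⁻ (x * u⁺) x (by rw [inf_comm]; exact hd1) hx
  have hdisj : (x * u⁺) ⊓ (x * u⁻) = 0 := by rw [inf_comm]; exact hd2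
  have h := aux_pp_of_disj hdisj
  rw [← mul_sub, posPart_sub_negPart] at h
  exact h.symm

lemma aux_mul_np {x : A} (hx : 0 ≤ x) (u : A) : x * u⁻ = (x * u)⁻ := by
  calc x * u⁻ = x * (-u)⁺ := by rw [posPart_neg]
  _ = (x * -u)⁺ := aux_mul_pp hx (-u)
  _ = (-(x * u))⁺ := by rw [mul_neg]
  _ = (x * u)⁻ := posPart_neg _

end FA


section Inst
variable {E : Type*} [AddCommGroup E] [Lattice E]
  [CovariantClass E E (· + ·) (· ≤ ·)] [CovariantClass E E (Function.swap (· + ·)) (· ≤ ·)]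

lemma aux_inf3 {a b c : E} (ha : 0 ≤ a) (hb : 0 ≤ b) (hc : 0 ≤ c) :
    (a + b) ⊓ c ≤ a ⊓ c + b ⊓ c := by
  have hbc : (0:E) ≤ b ⊓ c := le_inf hb hc
  have h1 : (a + b) ⊓ c ≤ (a + b ⊓ c) ⊓ c := by
    have h0 : (a + b) ⊓ c ≤ (a + b) ⊓ (a + c) :=
      le_inf inf_le_left (inf_le_right.trans (le_add_of_nonneg_left ha))
    rw [← add_inf b c a] at h0
    exact le_inf h0 inf_le_right
  have h2 : (a + b ⊓ c) ⊓ c ≤ (a + b ⊓ c) ⊓ (c + b ⊓ c) :=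
    le_inf inf_le_left (inf_le_right.trans (le_add_of_nonneg_right hbc))
  have h3 : (a + b ⊓ c) ⊓ (c + b ⊓ c) = a ⊓ c + b ⊓ c := by
    rw [add_comm a (b ⊓ c), add_comm c (b ⊓ c), ← add_inf a c (b ⊓ c), add_comm]
  exact h1.trans (h2.trans h3.le)

lemma aux_disj_add {a b c : E} (ha : 0 ≤ a) (hb : 0 ≤ b) (hc : 0 ≤ c)
    (h1 : a ⊓ c = 0) (h2 : b ⊓ c = 0) : (a + b) ⊓ c = 0 := by
  have := aux_inf3 ha hb hc
  rw [h1, h2, add_zero] at this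
  exact le_antisymm this (le_inf (add_nonneg ha hb) hc)

lemma aux_disj_add4 {a b c d : E} (ha : 0 ≤ a) (hb : 0 ≤ b) (hc : 0 ≤ c) (hd : 0 ≤ d)
    (h1 : a ⊓ c = 0) (h2 : a ⊓ d = 0) (h3 : b ⊓ c = 0) (h4 : b ⊓ d = 0) :
    (a + b) ⊓ (c + d) = 0 := by
  have hac : (a + b) ⊓ c = 0 := aux_disj_add ha hb hc h1 h3
  have had : (a + b) ⊓ d = 0 := aux_disj_add ha hb hd h2 h4
  have := aux_disj_add hc hd (add_nonneg ha hb) (by rw [inf_comm]; exact hac)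
    (by rw [inf_comm]; exact had)
  rw [inf_comm]; exact this

lemma aux_sup_le_add {x y : E} (hx : 0 ≤ x) (hy : 0 ≤ y) : x ⊔ y ≤ x + y := by
  have h := inf_add_sup x y
  have h2 : 0 ≤ x ⊓ y := le_inf hx hy
  calc x ⊔ y ≤ x ⊓ y + (x ⊔ y) := le_add_of_nonneg_left h2
  _ = x + y := h

lemma aux_abs_eq (x : E) : |x| = x⁺ + x⁻ := (posPart_add_negPart x).symm

end Inst

section DS
variable {A : Type*} [CommRing A] [Lattice A] [Module ℝ A] [FAlg A]
variable {D : Type*} [AddCommGroup D] [Lattice D] [Module ℝ D] [RieszSp D]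
variable {N : Type*} [CommRing N] [Lattice N] [Module ℝ N] [FAlg N]
variable [P : DualSetting A D N]

lemma aux_dpos {d : D} (hd : 0 ≤ d) {x : A} (hx : 0 ≤ x) : 0 ≤ P.dual d x :=
  (P.dual_order d).1 hd x hx

lemma aux_dle {d e : D} (h : ∀ x : A, 0 ≤ x → P.dual d x ≤ P.dual e x) : d ≤ e := by
  have h0 : 0 ≤ e - d := (P.dual_order _).2 (fun a ha => by
    rw [map_sub, LinearMap.sub_apply]
    have := h a ha; linarith)
  exact sub_nonneg.1 h0

lemma aux_dmono_left {d e : D} (h : d ≤ e) {x : A} (hx : 0 ≤ x) :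
    P.dual d x ≤ P.dual e x := by
  have h0 : 0 ≤ e - d := sub_nonneg.2 h
  have := aux_dpos (N := N) h0 hx
  rw [map_sub, LinearMap.sub_apply] at this; linarith

lemma aux_dmono_right {d : D} (hd : 0 ≤ d) {x y : A} (h : x ≤ y) :
    P.dual d x ≤ P.dual d y := by
  have := aux_dpos (N := N) hd (sub_nonneg.2 h); rw [map_sub] at this; linarith

set_option maxHeartbeats 2000000 in
lemma aux_extend (p : A → ℝ) (hadd : ∀ x y : A, 0 ≤ x → 0 ≤ y → p (x + y) = p x + p y)
    (hpos : ∀ x : A, 0 ≤ x → 0 ≤ p x) :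
    ∃ d : D, 0 ≤ d ∧ ∀ x : A, 0 ≤ x → P.dual d x = p x := by
  have p0 : p 0 = 0 := by
    have h := hadd 0 0 le_rfl le_rfl
    rw [add_zero] at h; linarith
  have pmono : ∀ x y : A, 0 ≤ x → x ≤ y → p x ≤ p y := by
    intro x y hx hxy
    have h := hadd x (y - x) hx (sub_nonneg.2 hxy)
    rw [add_sub_cancel] at h
    have := hpos _ (sub_nonneg.2 hxy); linarith
  have hsm : ∀ (x : A), 0 ≤ x → ∀ (r : ℝ), 0 ≤ r → p (r • x) = r * p x := by
    intro x hx
    have hP : ∀ u v : ℝ, 0 ≤ u → 0 ≤ v → p ((u + v) • x) = p (u • x) + p (v • x) := by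
      intro u v hu hv
      rw [add_smul]
      exact hadd _ _ (RieszSp.smul_nonneg u x hu hx) (RieszSp.smul_nonneg v x hv hx)
    have g0add : ∀ r s : ℝ, (fun r => p (r⁺ • x) - p (r⁻ • x)) (r + s)
        = (fun r => p (r⁺ • x) - p (r⁻ • x)) r + (fun r => p (r⁺ • x) - p (r⁻ • x)) s := by
      intro r s
      have e1 : (r+s)⁺ + (r⁻ + s⁻) = (r+s)⁻ + (r⁺ + s⁺) := by
        have h1 := posPart_sub_negPart (r+s)
        have h2 := posPart_sub_negPart r
        have h3 := posPart_sub_negPart s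
        linarith
      have l : p (((r+s)⁺ + (r⁻ + s⁻)) • x) = p ((r+s)⁺ • x) + (p (r⁻ • x) + p (s⁻ • x)) := by
        rw [hP _ _ (posPart_nonneg _) (add_nonneg (negPart_nonneg _) (negPart_nonneg _)),
          hP _ _ (negPart_nonneg _) (negPart_nonneg _)]
      have rgt : p (((r+s)⁻ + (r⁺ + s⁺)) • x) = p ((r+s)⁻ • x) + (p (r⁺ • x) + p (s⁺ • x)) := by
        rw [hP _ _ (negPart_nonneg _) (add_nonneg (posPart_nonneg _) (posPart_nonneg _)),
          hP _ _ (posPart_nonneg _) (posPart_nonneg _)]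
      have l2 : p ((r+s)⁺ • x) + (p (r⁻ • x) + p (s⁻ • x))
          = p ((r+s)⁻ • x) + (p (r⁺ • x) + p (s⁺ • x)) := by
        rw [← l, ← rgt, e1]
      simp only
      linarith
    set g : ℝ →+ ℝ := AddMonoidHom.mk' (fun r => p (r⁺ • x) - p (r⁻ • x)) g0add with hg
    have gval : ∀ r : ℝ, g r = p (r⁺ • x) - p (r⁻ • x) := fun r => rfl
    have grat : ∀ q : ℚ, g (q:ℝ) = (q:ℝ) * g 1 := by
      intro q
      have := map_ratCast_smul g ℝ ℝ q (1:ℝ)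
      simpa [smul_eq_mul] using this
    have gmono : ∀ r s : ℝ, r ≤ s → g r ≤ g s := by
      intro r s h
      have h1 : g s - g r = g (s - r) := (map_sub g s r).symm
      have h2 : 0 ≤ g (s - r) := by
        rw [gval, negPart_of_nonneg (sub_nonneg.2 h), zero_smul, p0]
        simpa using hpos _ (RieszSp.smul_nonneg _ _ (posPart_nonneg _) hx)
      linarith
    have g1 : g 1 = p x := by
      rw [gval, posPart_of_nonneg (zero_le_one), negPart_of_nonneg (zero_le_one), one_smul,
        zero_smul, p0, sub_zero]
    have hpx : 0 ≤ p x := hpos x hx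
    have glin : ∀ r : ℝ, g r = r * p x := by
      intro r
      refine le_antisymm ?_ ?_
      · refine le_of_forall_pos_le_add ?_
        intro ε hε
        have hq0 : r < r + ε / (p x + 1) := by
          have : 0 < ε / (p x + 1) := div_pos hε (by linarith)
          linarith
        obtain ⟨q, hq1, hq2⟩ := exists_rat_btwn hq0
        have h1 := gmono r q hq1.le
        rw [grat q, g1] at h1
        have h2 : (q:ℝ) * p x ≤ (r + ε / (p x + 1)) * p x :=
          mul_le_mul_of_nonneg_right hq2.le hpx
        have h3 : (r + ε / (p x + 1)) * p x ≤ r * p x + ε := by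
          have h4 : ε / (p x + 1) * p x ≤ ε := by
            rw [div_mul_eq_mul_div, div_le_iff₀ (by linarith : (0:ℝ) < p x + 1)]
            nlinarith
          nlinarith
        linarith
      · refine le_of_forall_pos_le_add ?_
        intro ε hε
        have hq0 : r - ε / (p x + 1) < r := by
          have : 0 < ε / (p x + 1) := div_pos hε (by linarith)
          linarith
        obtain ⟨q, hq1, hq2⟩ := exists_rat_btwn hq0
        have h1 := gmono q r hq2.le
        rw [grat q, g1] at h1
        have h2 : (r - ε / (p x + 1)) * p x ≤ (q:ℝ) * p x :=
          mul_le_mul_of_nonneg_right hq1.le hpx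
        have h3 : r * p x - ε ≤ (r - ε / (p x + 1)) * p x := by
          have h4 : ε / (p x + 1) * p x ≤ ε := by
            rw [div_mul_eq_mul_div, div_le_iff₀ (by linarith : (0:ℝ) < p x + 1)]
            nlinarith
          nlinarith
        linarith
    intro r hr
    have hgr : g r = p (r • x) := by
      rw [gval, posPart_of_nonneg hr, negPart_of_nonneg hr, zero_smul, p0, sub_zero]
    rw [← hgr, glin]
  -- the linear extension
  have fadd : ∀ w z : A, p (w+z)⁺ - p (w+z)⁻ = (p w⁺ - p w⁻) + (p z⁺ - p z⁻) := by
    intro w z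
    have e1 : (w+z)⁺ + (w⁻ + z⁻) = (w+z)⁻ + (w⁺ + z⁺) := by
      have h1 := posPart_sub_negPart (w+z)
      have h2 := posPart_sub_negPart w
      have h3 := posPart_sub_negPart z
      have h5 : ((w+z)⁺ + (w⁻ + z⁻)) - ((w+z)⁻ + (w⁺ + z⁺))
          = ((w+z)⁺ - (w+z)⁻) - ((w⁺ - w⁻) + (z⁺ - z⁻)) := by abel
      rw [h1, h2, h3] at h5
      have h6 : ((w+z)⁺ + (w⁻ + z⁻)) - ((w+z)⁻ + (w⁺ + z⁺)) = 0 := by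
        rw [h5]; abel
      exact sub_eq_zero.1 h6
    have l : p ((w+z)⁺ + (w⁻ + z⁻)) = p ((w+z)⁺) + (p w⁻ + p z⁻) := by
      rw [hadd _ _ (posPart_nonneg _) (add_nonneg (negPart_nonneg _) (negPart_nonneg _)),
        hadd _ _ (negPart_nonneg _) (negPart_nonneg _)]
    have rgt : p ((w+z)⁻ + (w⁺ + z⁺)) = p ((w+z)⁻) + (p w⁺ + p z⁺) := by
      rw [hadd _ _ (negPart_nonneg _) (add_nonneg (posPart_nonneg _) (posPart_nonneg _)),
        hadd _ _ (posPart_nonneg _) (posPart_nonneg _)]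
    have e2 : p ((w+z)⁺) + (p w⁻ + p z⁻) = p ((w+z)⁻) + (p w⁺ + p z⁺) := by
      rw [← l, ← rgt, e1]
    linarith
  have fsmul : ∀ (r : ℝ) (w : A), p (r • w)⁺ - p (r • w)⁻ = r * (p w⁺ - p w⁻) := by
    intro r w
    rcases le_or_gt 0 r with hr | hr
    · have hn : (r • w)⁻ = r • w⁻ := by
        rw [← posPart_neg, ← posPart_neg w, ← smul_neg, aux_smul_pp hr]
      rw [aux_smul_pp hr w, hn, hsm _ (posPart_nonneg w) r hr,
        hsm _ (negPart_nonneg w) r hr]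
      ring
    · have ht : (0:ℝ) ≤ -r := by linarith
      have h1 : (r • w)⁺ = (-r) • w⁻ := by
        rw [← posPart_neg w, ← aux_smul_pp ht, smul_neg, neg_smul, neg_neg]
      have h2 : (r • w)⁻ = (-r) • w⁺ := by
        rw [← posPart_neg (r • w), ← neg_smul, aux_smul_pp ht]
      rw [h1, h2, hsm _ (negPart_nonneg w) _ ht, hsm _ (posPart_nonneg w) _ ht]
      ring
  set φ : A →ₗ[ℝ] ℝ :=
    { toFun := fun w => p w⁺ - p w⁻
      map_add' := fadd
      map_smul' := fun r w => by simpa using fsmul r w } with hφdef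
  have φval : ∀ w : A, φ w = p w⁺ - p w⁻ := fun _ => rfl
  have φmono : ∀ w z : A, w ≤ z → φ w ≤ φ z := by
    intro w z h
    have h1 : φ z - φ w = φ (z - w) := (map_sub φ z w).symm
    have h2 : 0 ≤ φ (z - w) := by
      rw [φval, negPart_of_nonneg (sub_nonneg.2 h), p0]
      simpa using hpos _ (posPart_nonneg (z - w))
    linarith
  have hbdd : OrderBddFn φ := by
    intro a b
    refine ⟨max |φ a| |φ b|, fun w h1 h2 => ?_⟩
    rw [abs_le]
    constructor
    · have := φmono a w h1
      have h3 := neg_abs_le (φ a)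
      have := le_max_left |φ a| |φ b|
      linarith
    · have := φmono w b h2
      have h3 := le_abs_self (φ b)
      have := le_max_right |φ a| |φ b|
      linarith
  obtain ⟨d, hd⟩ := P.dual_surj φ hbdd
  have hval : ∀ x : A, 0 ≤ x → P.dual d x = p x := by
    intro x hx
    rw [hd, φval, posPart_of_nonneg hx, negPart_of_nonneg hx, p0, sub_zero]
  refine ⟨d, (P.dual_order d).2 (fun a ha => by rw [hval a ha]; exact hpos a ha), hval⟩


lemma aux_inf_decomp (x y : A) : x = x ⊓ y + (x - y)⁺ := by
  rw [← aux_sub_infid]; abel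

set_option maxHeartbeats 1000000 in
lemma aux_rk {u v : D} (hu : 0 ≤ u) (hv : 0 ≤ v) (huv : u ⊓ v = 0) :
    ∀ a : A, 0 ≤ a → ∀ ε : ℝ, 0 < ε →
      ∃ c : A, 0 ≤ c ∧ c ≤ a ∧ P.dual u c + P.dual v (a - c) < ε := by
  set S : A → Set ℝ :=
    fun x => {t | ∃ c : A, 0 ≤ c ∧ c ≤ x ∧ t = P.dual u c + P.dual v (x - c)} with hS
  have hne : ∀ x : A, 0 ≤ x → (S x).Nonempty :=
    fun x hx => ⟨P.dual u 0 + P.dual v (x - 0), 0, le_rfl, hx, rfl⟩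
  have hbb : ∀ x : A, 0 ≤ x → ∀ t ∈ S x, 0 ≤ t := by
    rintro x hx t ⟨c, hc0, hcx, rfl⟩
    have h1 := aux_dpos (N := N) hu hc0
    have h2 := aux_dpos (N := N) hv (sub_nonneg.2 hcx)
    linarith
  set p : A → ℝ := fun x => sInf (S x) with hp
  have hbdd : ∀ x : A, 0 ≤ x → BddBelow (S x) := fun x hx => ⟨0, fun t ht => hbb x hx t ht⟩
  have ppos : ∀ x : A, 0 ≤ x → 0 ≤ p x := fun x hx => le_csInf (hne x hx) (hbb x hx)
  have pinfle : ∀ x, 0 ≤ x → ∀ t ∈ S x, p x ≤ t := fun x hx t ht => csInf_le (hbdd x hx) ht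
  have hsuper : ∀ x y : A, 0 ≤ x → 0 ≤ y → p x + p y ≤ p (x + y) := by
    intro x y hx hy
    refine le_csInf (hne _ (add_nonneg hx hy)) ?_
    rintro t ⟨c, hc0, hcxy, rfl⟩
    have hdec : c = c ⊓ x + (c - x)⁺ := aux_inf_decomp c x
    have hc₁0 : 0 ≤ c ⊓ x := le_inf hc0 hx
    have hc₁x : c ⊓ x ≤ x := inf_le_right
    have hc₂0 : 0 ≤ (c - x)⁺ := posPart_nonneg _
    have hc₂y : (c - x)⁺ ≤ y := by
      calc (c - x)⁺ ≤ (x + y - x)⁺ := posPart_mono (sub_le_sub_right hcxy x)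
      _ = y⁺ := by rw [add_sub_cancel_left]
      _ = y := posPart_of_nonneg hy
    have e2 : x + y - c = (x - c ⊓ x) + (y - (c - x)⁺) := by
      nth_rewrite 1 [hdec]; abel
    have e : P.dual u c + P.dual v (x + y - c)
        = (P.dual u (c ⊓ x) + P.dual v (x - c ⊓ x))
          + (P.dual u ((c - x)⁺) + P.dual v (y - (c - x)⁺)) := by
      rw [e2]
      nth_rewrite 1 [hdec]
      rw [map_add, map_add]
      ring
    have h1 : p x ≤ P.dual u (c ⊓ x) + P.dual v (x - c ⊓ x) :=
      pinfle x hx _ ⟨c ⊓ x, hc₁0, hc₁x, rfl⟩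
    have h2 : p y ≤ P.dual u ((c - x)⁺) + P.dual v (y - (c - x)⁺) :=
      pinfle y hy _ ⟨(c - x)⁺, hc₂0, hc₂y, rfl⟩
    rw [e]
    linarith
  have hsub : ∀ x y : A, 0 ≤ x → 0 ≤ y → p (x + y) ≤ p x + p y := by
    intro x y hx hy
    refine le_of_forall_pos_le_add ?_
    intro ε hε
    obtain ⟨t1, ht1S, ht1⟩ := exists_lt_of_csInf_lt (hne x hx)
      (show sInf (S x) < p x + ε / 2 by rw [hp]; linarith)
    obtain ⟨t2, ht2S, ht2⟩ := exists_lt_of_csInf_lt (hne y hy)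
      (show sInf (S y) < p y + ε / 2 by rw [hp]; linarith)
    obtain ⟨c1, hc10, hc1x, rfl⟩ := ht1S
    obtain ⟨c2, hc20, hc2y, rfl⟩ := ht2S
    have hmem : P.dual u (c1 + c2) + P.dual v (x + y - (c1 + c2)) ∈ S (x + y) :=
      ⟨c1 + c2, add_nonneg hc10 hc20, add_le_add hc1x hc2y, rfl⟩
    have e : P.dual u (c1 + c2) + P.dual v (x + y - (c1 + c2))
        = (P.dual u c1 + P.dual v (x - c1)) + (P.dual u c2 + P.dual v (y - c2)) := by
      have e2 : x + y - (c1 + c2) = (x - c1) + (y - c2) := by abel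
      rw [e2, map_add, map_add]; ring
    have := pinfle (x + y) (add_nonneg hx hy) _ hmem
    rw [e] at this
    linarith
  have haddp : ∀ x y : A, 0 ≤ x → 0 ≤ y → p (x + y) = p x + p y :=
    fun x y hx hy => le_antisymm (hsub x y hx hy) (hsuper x y hx hy)
  obtain ⟨d, hd0, hdval⟩ := aux_extend (D := D) (N := N) p haddp ppos
  have hdu : d ≤ u := aux_dle (N := N) (fun x hx => by
    rw [hdval x hx]
    exact pinfle x hx _ ⟨x, hx, le_rfl, by rw [sub_self, map_zero, add_zero]⟩)
  have hdv : d ≤ v := aux_dle (N := N) (fun x hx => by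
    rw [hdval x hx]
    have := pinfle x hx (P.dual u 0 + P.dual v (x - 0)) ⟨0, le_rfl, hx, rfl⟩
    rw [map_zero, sub_zero] at this
    linarith)
  have hdle0 : d ≤ 0 := huv ▸ le_inf hdu hdv
  intro a ha ε hε
  have hpa : p a ≤ 0 := by
    rw [← hdval a ha]
    have h2 := aux_dmono_left (N := N) hdle0 ha
    have h3 : P.dual (0 : D) a = 0 := by rw [map_zero]; rfl
    linarith
  obtain ⟨t, htS, htlt⟩ := exists_lt_of_csInf_lt (hne a ha)
    (show sInf (S a) < ε from lt_of_le_of_lt (le_of_eq_of_le (show sInf (S a) = p a from rfl).symm.symm (by rw [show p a = sInf (S a) from rfl] at hpa; exact hpa)) hε)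
  obtain ⟨c, hc0, hca, rfl⟩ := htS
  exact ⟨c, hc0, hca, htlt⟩

set_option maxHeartbeats 1000000 in
lemma aux_ev1 : ∃ E : N, ∀ h : D, P.bidual E h = P.dual h 1 := by
  set Φ : D →ₗ[ℝ] ℝ := P.dual.flip 1 with hΦ
  have hΦval : ∀ h : D, Φ h = P.dual h 1 := fun h => rfl
  have h1 : (0 : A) ≤ 1 := aux_one_nonneg
  have hmono : ∀ {d e : D}, d ≤ e → Φ d ≤ Φ e := fun {d e} hde => by
    rw [hΦval, hΦval]; exact aux_dmono_left (N := N) hde h1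
  have hbdd : OrderBddFn Φ := by
    intro a b
    refine ⟨max |Φ a| |Φ b|, fun x hax hxb => ?_⟩
    rw [abs_le]
    constructor
    · have := hmono hax
      have h3 := neg_abs_le (Φ a)
      have := le_max_left |Φ a| |Φ b|
      linarith
    · have := hmono hxb
      have h3 := le_abs_self (Φ b)
      have := le_max_right |Φ a| |Φ b|
      linarith
  have hcont : OrdContFn Φ := by
    intro s hsne hdir hglb ε hε
    have hd0 : ∀ d ∈ s, (0:D) ≤ d := fun d hd => hglb.1 hd
    set S : A → Set ℝ := fun x => {t | ∃ d ∈ s, t = P.dual d x} with hSdef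
    obtain ⟨d₀, hd₀⟩ := hsne
    have hSne : ∀ x : A, (S x).Nonempty := fun x => ⟨P.dual d₀ x, d₀, hd₀, rfl⟩
    have hSbb : ∀ x : A, 0 ≤ x → ∀ t ∈ S x, 0 ≤ t := by
      rintro x hx t ⟨d, hd, rfl⟩
      exact aux_dpos (N := N) (hd0 d hd) hx
    set q : A → ℝ := fun x => sInf (S x) with hq
    have hqpos : ∀ x, 0 ≤ x → 0 ≤ q x := fun x hx => le_csInf (hSne x) (hSbb x hx)
    have hqle : ∀ x, 0 ≤ x → ∀ d ∈ s, q x ≤ P.dual d x :=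
      fun x hx d hd => csInf_le ⟨0, hSbb x hx⟩ ⟨d, hd, rfl⟩
    have hqadd : ∀ x y : A, 0 ≤ x → 0 ≤ y → q (x + y) = q x + q y := by
      intro x y hx hy
      refine le_antisymm ?_ ?_
      · refine le_of_forall_pos_le_add ?_
        intro ε' hε'
        obtain ⟨t1, ht1S, ht1⟩ := exists_lt_of_csInf_lt (hSne x)
          (show sInf (S x) < q x + ε' / 2 by rw [hq]; linarith)
        obtain ⟨t2, ht2S, ht2⟩ := exists_lt_of_csInf_lt (hSne y)
          (show sInf (S y) < q y + ε' / 2 by rw [hq]; linarith)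
        obtain ⟨d1, hd1, rfl⟩ := ht1S
        obtain ⟨d2, hd2, rfl⟩ := ht2S
        obtain ⟨d3, hd3, h31, h32⟩ := hdir d1 hd1 d2 hd2
        have hle : q (x + y) ≤ P.dual d3 (x + y) := hqle _ (add_nonneg hx hy) d3 hd3
        rw [map_add] at hle
        have e1 : P.dual d3 x ≤ P.dual d1 x := aux_dmono_left (N := N) h31 hx
        have e2 : P.dual d3 y ≤ P.dual d2 y := aux_dmono_left (N := N) h32 hy
        linarith
      · refine le_csInf (hSne _) ?_
        rintro t ⟨d, hd, rfl⟩
        rw [map_add]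
        have hx' := hqle x hx d hd
        have hy' := hqle y hy d hd
        linarith
    obtain ⟨e, he0, heval⟩ := aux_extend (D := D) (N := N) q hqadd hqpos
    have helow : e ∈ lowerBounds s := fun d hd =>
      aux_dle (N := N) (fun x hx => by rw [heval x hx]; exact hqle x hx d hd)
    have he_le : e ≤ 0 := hglb.2 helow
    have hq1 : q 1 = 0 := by
      refine le_antisymm ?_ (hqpos 1 h1)
      have h2 := aux_dmono_left (N := N) he_le h1
      have h3 : P.dual (0 : D) (1:A) = 0 := by rw [map_zero]; rfl
      rw [heval 1 h1] at h2
      linarith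
    obtain ⟨t, htS, htlt⟩ := exists_lt_of_csInf_lt (hSne 1)
      (show sInf (S 1) < ε by rw [show sInf (S 1) = q 1 from rfl, hq1]; exact hε)
    obtain ⟨d, hd, rfl⟩ := htS
    refine ⟨d, hd, fun d' hd' hle => ?_⟩
    have h0' : 0 ≤ P.dual d' 1 := aux_dpos (N := N) (hd0 d' hd') h1
    have hle' : P.dual d' 1 ≤ P.dual d 1 := aux_dmono_left (N := N) hle h1
    rw [hΦval, abs_of_nonneg h0']
    linarith
  obtain ⟨E, hE⟩ := P.bidual_surj Φ hbdd hcont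
  exact ⟨E, fun h => by rw [hE]; exact hΦval h⟩

lemma aux_natCast_nonneg : ∀ n : ℕ, (0:A) ≤ (n : A) := by
  intro n
  induction n with
  | zero => simp
  | succ k ih =>
    push_cast
    exact add_nonneg ih aux_one_nonneg

lemma aux_dual_natCast (d : D) (n : ℕ) (w : A) :
    P.dual d ((n : A) * w) = n * P.dual d w := by
  induction n with
  | zero => simp
  | succ k ih =>
    push_cast
    rw [add_mul, one_mul, map_add, ih]
    ring

lemma aux_pp_sum {x : A} (hx : 0 ≤ x) (u : A) : u⁺ + (x * u)⁺ = (u + x * u)⁺ := by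
  have d11 : u⁺ ⊓ u⁻ = 0 := posPart_inf_negPart_eq_zero u
  have d12 : u⁺ ⊓ (x * u)⁻ = 0 := by
    rw [← aux_mul_np hx u, inf_comm]
    exact FAlg.disjoint_mul u⁻ u⁺ x (by rw [inf_comm]; exact d11) hx
  have d21 : (x * u)⁺ ⊓ u⁻ = 0 := by
    rw [← aux_mul_pp hx u]
    exact FAlg.disjoint_mul u⁺ u⁻ x d11 hx
  have d22 : (x * u)⁺ ⊓ (x * u)⁻ = 0 := posPart_inf_negPart_eq_zero _
  have hdisj : (u⁺ + (x * u)⁺) ⊓ (u⁻ + (x * u)⁻) = 0 :=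
    aux_disj_add4 (posPart_nonneg _) (posPart_nonneg _) (negPart_nonneg _) (negPart_nonneg _)
      d11 d12 d21 d22
  have hsub : (u⁺ + (x * u)⁺) - (u⁻ + (x * u)⁻) = u + x * u := by
    have h1 := posPart_sub_negPart u
    have h2 := posPart_sub_negPart (x * u)
    calc u⁺ + (x * u)⁺ - (u⁻ + (x * u)⁻) = (u⁺ - u⁻) + ((x * u)⁺ - (x * u)⁻) := by abel
    _ = u + x * u := by rw [h1, h2]
  have h := aux_pp_of_disj hdisj
  rw [hsub] at h
  exact h.symm

lemma aux_trick (f₀ g₀ : D) (hf₀ : 0 ≤ f₀) (hg₀ : 0 ≤ g₀)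
    (hdisj : ∀ a : A, 0 ≤ a → ∀ ε : ℝ, 0 < ε →
      ∃ c : A, 0 ≤ c ∧ c ≤ a ∧ P.dual f₀ c + P.dual g₀ (a - c) < ε)
    (a x : A) (ha : 0 ≤ a) (hx : 0 ≤ x) (δ : ℝ) (hδ : 0 < δ) :
    ∃ c : A, 0 ≤ c ∧ c ≤ a ∧ P.dual g₀ (a - c) < δ ∧ P.dual f₀ (c + x * c) < δ := by
  obtain ⟨z, hz0, hza, hsum⟩ :=
    hdisj (a + x * a) (add_nonneg ha (FAlg.mul_nonneg x a hx ha)) δ hδ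
  have hfz : P.dual f₀ z < δ := by
    have := aux_dpos (N := N) hg₀ (sub_nonneg.2 hza); linarith
  have hgw : P.dual g₀ (a + x * a - z) < δ := by
    have := aux_dpos (N := N) hf₀ hz0; linarith
  set w : A := a + x * a - z with hw
  have hw0 : 0 ≤ w := sub_nonneg.2 hza
  have hac : a - (a - w)⁺ = a ⊓ w := by
    rw [← aux_sub_infid a w]; exact sub_sub_cancel a (a ⊓ w)
  refine ⟨(a - w)⁺, posPart_nonneg _, ?_, ?_, ?_⟩
  · have h0 : 0 ≤ a - (a - w)⁺ := by rw [hac]; exact le_inf ha hw0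
    exact sub_nonneg.1 h0
  · rw [hac]
    calc P.dual g₀ (a ⊓ w) ≤ P.dual g₀ w := aux_dmono_right (N := N) hg₀ inf_le_right
    _ < δ := hgw
  · have hkey : (a - w)⁺ + x * (a - w)⁺ ≤ z := by
      have h1 : x * (a - w)⁺ = (x * (a - w))⁺ := aux_mul_pp hx (a - w)
      have h2 : (a - w)⁺ + (x * (a - w))⁺ = ((a - w) + x * (a - w))⁺ := aux_pp_sum hx (a - w)
      have h3 : (a - w) + x * (a - w) ≤ z := by
        have hxw : 0 ≤ x * w := FAlg.mul_nonneg x w hx hw0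
        have he : (a - w) + x * (a - w) = z - x * w := by rw [hw]; ring
        rw [he]
        calc z - x * w ≤ z - 0 := sub_le_sub_left hxw z
        _ = z := sub_zero z
      calc (a - w)⁺ + x * (a - w)⁺ = ((a - w) + x * (a - w))⁺ := by rw [h1, h2]
      _ ≤ z⁺ := posPart_mono h3
      _ = z := posPart_of_nonneg hz0
    exact lt_of_le_of_lt (aux_dmono_right (N := N) hf₀ hkey) hfz

set_option maxHeartbeats 2000000 in
lemma aux_key (f₀ g₀ : D) (hf₀ : 0 ≤ f₀) (hg₀ : 0 ≤ g₀)
    (hdisj : ∀ a : A, 0 ≤ a → ∀ ε : ℝ, 0 < ε →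
      ∃ c : A, 0 ≤ c ∧ c ≤ a ∧ P.dual f₀ c + P.dual g₀ (a - c) < ε)
    (F : N) (a : A) (ha : 0 ≤ a) (ε δ : ℝ) (hε : 0 < ε) (hδ : 0 < δ) :
    ∃ c : A, 0 ≤ c ∧ c ≤ a ∧ P.dual g₀ (a - c) < δ ∧ P.bidual F (P.dsmul c f₀) < ε := by
  set pr : ℕ → A → Prop := fun k c => 0 ≤ c ∧ c ≤ a ∧
    P.dual g₀ (a - c) < δ * (1 - (1/2)^(k+1)) ∧ P.dual f₀ (c + a * c) < (1/2)^(k+1) with hpr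
  have base : ∃ c, pr 0 c := by
    obtain ⟨c, h0, h1, h2, h3⟩ := aux_trick (N := N) f₀ g₀ hf₀ hg₀ hdisj a a ha ha
      (min (δ * (1/2)) ((1/2)^1)) (by positivity)
    refine ⟨c, h0, h1, ?_, ?_⟩
    · have := min_le_left (δ * (1/2)) ((1/2:ℝ)^1)
      have he : δ * (1 - (1/2:ℝ)^(0+1)) = δ * (1/2) := by norm_num
      rw [he]; linarith
    · have := min_le_right (δ * (1/2)) ((1/2:ℝ)^1)
      have he : ((1:ℝ)/2)^(0+1) = (1/2:ℝ)^1 := by norm_num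
      rw [he]; linarith
  have step : ∀ (k : ℕ) (c : A), pr k c → ∃ c', pr (k+1) c' ∧ c' ≤ c := by
    intro k c hc
    obtain ⟨hc0, hca, hg, hf⟩ := hc
    obtain ⟨c', h0', h1', h2', h3'⟩ := aux_trick (N := N) f₀ g₀ hf₀ hg₀ hdisj a a ha ha
      (min (δ * (1/2)^(k+2)) ((1/2)^(k+2))) (by positivity)
    refine ⟨c ⊓ c', ⟨le_inf hc0 h0', inf_le_left.trans hca, ?_, ?_⟩, inf_le_left⟩
    · have hsplit : a - c ⊓ c' = (a - c) ⊔ (a - c') := sub_inf c c' a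
      have hboth : (a - c) ⊔ (a - c') ≤ (a - c) + (a - c') :=
        aux_sup_le_add (sub_nonneg.2 hca) (sub_nonneg.2 h1')
      have hmono := aux_dmono_right (N := N) hg₀
        (show a - c ⊓ c' ≤ (a - c) + (a - c') from hsplit ▸ hboth)
      rw [map_add] at hmono
      have hb2 : P.dual g₀ (a - c') < δ * (1/2)^(k+2) :=
        lt_of_lt_of_le h2' (min_le_left _ _)
      have hpow : (0:ℝ) < (1/2)^(k+2) := by positivity
      have harith : δ * (1 - (1/2:ℝ)^(k+1)) + δ * (1/2)^(k+2) ≤ δ * (1 - (1/2)^(k+2)) := by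
        have h4 : ((1:ℝ)/2)^(k+1) = (1/2)^(k+2) + (1/2)^(k+2) := by ring
        nlinarith
      linarith
    · have hle2 : (c ⊓ c') + a * (c ⊓ c') ≤ c' + a * c' :=
        add_le_add inf_le_right (aux_mul_mono ha inf_le_right)
      have hmono := aux_dmono_right (N := N) hf₀ hle2
      have hb3 : P.dual f₀ (c' + a * c') < (1/2)^(k+2) :=
        lt_of_lt_of_le h3' (min_le_right _ _)
      have hpow : ((1:ℝ)/2)^(k+2) ≤ (1/2)^(k+1) :=
        pow_le_pow_of_le_one (by norm_num) (by norm_num) (by omega)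
      linarith
  obtain ⟨c0, hc0⟩ := base
  choose nxt hnxt hlee using step
  let Fs : ∀ k : ℕ, {c : A // pr k c} := fun k =>
    Nat.rec (motive := fun k => {c : A // pr k c}) ⟨c0, hc0⟩
      (fun k ih => ⟨nxt k ih.1 ih.2, hnxt k ih.1 ih.2⟩) k
  set cs : ℕ → A := fun k => (Fs k).1 with hcs
  have hprk : ∀ k, pr k (cs k) := fun k => (Fs k).2
  have hsucc : ∀ k, cs (k+1) ≤ cs k := fun k => hlee k (cs k) (hprk k)
  have hanti : Antitone cs := antitone_nat_of_succ_le hsucc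
  have hcs0 : ∀ k, 0 ≤ cs k := fun k => (hprk k).1
  have hcsa : ∀ k, cs k ≤ a := fun k => (hprk k).2.1
  have hcsg : ∀ k, P.dual g₀ (a - cs k) < δ := by
    intro k
    have h1 := (hprk k).2.2.1
    have h2 : δ * (1 - (1/2:ℝ)^(k+1)) ≤ δ := by
      have : (0:ℝ) < (1/2)^(k+1) := by positivity
      nlinarith
    linarith
  have hcsf : ∀ k, P.dual f₀ (cs k + a * cs k) < (1/2)^(k+1) := fun k => (hprk k).2.2.2
  set s : Set D := Set.range (fun k => P.dsmul (cs k) f₀) with hs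
  have hsne : s.Nonempty := ⟨_, 0, rfl⟩
  have hdsmono : ∀ {b c : A}, b ≤ c → P.dsmul b f₀ ≤ P.dsmul c f₀ := by
    intro b c h
    apply aux_dle (A := A) (N := N)
    intro y hy
    rw [P.dsmul_eval, P.dsmul_eval]
    apply aux_dmono_right (N := N) hf₀
    have h2 := FAlg.mul_nonneg (c - b) y (sub_nonneg.2 h) hy
    rw [sub_mul] at h2
    exact sub_nonneg.1 h2
  have hdir : DirectedOn (· ≥ ·) s := by
    rintro d1 ⟨i, rfl⟩ d2 ⟨j, rfl⟩
    exact ⟨P.dsmul (cs (max i j)) f₀, ⟨max i j, rfl⟩,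
      hdsmono (hanti (le_max_left i j)), hdsmono (hanti (le_max_right i j))⟩
  have hdspos : ∀ k, 0 ≤ P.dsmul (cs k) f₀ := by
    intro k
    refine (P.dual_order _).2 (fun y hy => ?_)
    rw [P.dsmul_eval]
    exact aux_dpos (N := N) hf₀ (FAlg.mul_nonneg _ _ (hcs0 k) hy)
  have hglb : IsGLB s 0 := by
    constructor
    · rintro d ⟨k, rfl⟩; exact hdspos k
    · intro e he
      have he' : ∀ k, e⁺ ≤ P.dsmul (cs k) f₀ := fun k => sup_le (he ⟨k, rfl⟩) (hdspos k)
      have hzero : ∀ y : A, 0 ≤ y → P.dual e⁺ y = 0 := by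
        intro y hy
        have hCnn : 0 ≤ P.dual f₀ (y * y) :=
          aux_dpos (N := N) hf₀ (FAlg.mul_nonneg y y hy hy)
        have hup : ∀ n k : ℕ, P.dual e⁺ y ≤
            (n + 1) * P.dual f₀ (cs k + a * cs k) + P.dual f₀ (y * y) / (n + 1) := by
          intro n k
          set m : A := ((n + 1 : ℕ) : A) * a with hm
          have hm0 : 0 ≤ m := FAlg.mul_nonneg _ _ (aux_natCast_nonneg (n+1)) ha
          have hdecy : y = y ⊓ m + (y - m)⁺ := aux_inf_decomp y m
          have hT1 : P.dual e⁺ (y ⊓ m) ≤ (n + 1) * P.dual f₀ (cs k + a * cs k) := by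
            have h1 : P.dual e⁺ (y ⊓ m) ≤ P.dual (P.dsmul (cs k) f₀) (y ⊓ m) :=
              aux_dmono_left (N := N) (he' k) (le_inf hy hm0)
            rw [P.dsmul_eval] at h1
            have h2 : cs k * (y ⊓ m) ≤ ((n + 1 : ℕ) : A) * (cs k * a) := by
              have h3 : cs k * (y ⊓ m) ≤ cs k * m := aux_mul_mono (hcs0 k) inf_le_right
              have h4 : cs k * m = ((n + 1 : ℕ) : A) * (cs k * a) := by rw [hm]; ring
              rw [← h4]; exact h3
            have h5 := aux_dmono_right (N := N) hf₀ h2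
            rw [aux_dual_natCast f₀ (n+1) (cs k * a)] at h5
            have h6 : P.dual f₀ (cs k * a) ≤ P.dual f₀ (cs k + a * cs k) := by
              apply aux_dmono_right (N := N) hf₀
              rw [mul_comm]
              exact le_add_of_nonneg_left (hcs0 k)
            have h7 : ((n + 1 : ℕ) : ℝ) * P.dual f₀ (cs k * a)
                ≤ ((n + 1 : ℕ) : ℝ) * P.dual f₀ (cs k + a * cs k) :=
              mul_le_mul_of_nonneg_left h6 (by positivity)
            have h8 : ((n + 1 : ℕ) : ℝ) = (n : ℝ) + 1 := by push_cast; ring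
            rw [h8] at h5 h7
            linarith
          have hT2 : P.dual e⁺ ((y - m)⁺) ≤ P.dual f₀ (y * y) / (n + 1) := by
            have h1 : e⁺ ≤ P.dsmul a f₀ := (he' k).trans (hdsmono (hcsa k))
            have h2 : P.dual e⁺ ((y - m)⁺) ≤ P.dual f₀ (a * (y - m)⁺) := by
              have h2' := aux_dmono_left (N := N) h1 (posPart_nonneg (y - m))
              rwa [P.dsmul_eval] at h2'
            have h3 : ((n + 1 : ℕ) : A) * (a * (y - m)⁺) ≤ y * y := by
              have hz : (y - m)⁻ * (y - m)⁺ = 0 :=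
                aux_dpz (negPart_nonneg _) (posPart_nonneg _)
                  (by rw [inf_comm]; exact posPart_inf_negPart_eq_zero _)
              have hvpos : (y - m) * (y - m)⁺ = ((y - m)⁺) * ((y - m)⁺) := by
                calc (y - m) * (y - m)⁺ = ((y - m)⁺ - (y - m)⁻) * (y - m)⁺ := by
                      rw [posPart_sub_negPart]
                _ = (y - m)⁺ * (y - m)⁺ - (y - m)⁻ * (y - m)⁺ := by ring
                _ = (y - m)⁺ * (y - m)⁺ := by rw [hz, sub_zero]
              have h4 : m * (y - m)⁺ ≤ y * (y - m)⁺ := by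
                have h5 : 0 ≤ (y - m) * (y - m)⁺ := by
                  rw [hvpos]
                  exact FAlg.mul_nonneg _ _ (posPart_nonneg _) (posPart_nonneg _)
                rw [sub_mul] at h5
                exact sub_nonneg.1 h5
              have h6 : y * (y - m)⁺ ≤ y * y := by
                apply aux_mul_mono hy
                have hym : y - m ≤ y := by
                  calc y - m ≤ y - 0 := sub_le_sub_left hm0 y
                  _ = y := sub_zero y
                calc (y - m)⁺ ≤ y⁺ := posPart_mono hym
                _ = y := posPart_of_nonneg hy
              have h7 : ((n + 1 : ℕ) : A) * (a * (y - m)⁺) = m * (y - m)⁺ := by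
                rw [hm]; ring
              rw [h7]; exact h4.trans h6
            have h8 := aux_dmono_right (N := N) hf₀ h3
            rw [aux_dual_natCast f₀ (n+1) (a * (y - m)⁺)] at h8
            have h9 : (0:ℝ) < (n : ℝ) + 1 := by positivity
            have h10 : ((n + 1 : ℕ) : ℝ) = (n : ℝ) + 1 := by push_cast; ring
            rw [h10] at h8
            have h11 : P.dual f₀ (a * (y - m)⁺) ≤ P.dual f₀ (y * y) / ((n:ℝ) + 1) := by
              rw [le_div_iff₀ h9]
              nlinarith
            linarith
          have hsplity : P.dual e⁺ y = P.dual e⁺ (y ⊓ m) + P.dual e⁺ ((y - m)⁺) := by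
            nth_rewrite 1 [hdecy]
            rw [map_add]
          rw [hsplity]
          exact add_le_add hT1 hT2
        have hnn : ∀ n : ℕ, P.dual e⁺ y ≤ P.dual f₀ (y * y) / (n + 1) := by
          intro n
          refine le_of_forall_pos_le_add ?_
          intro η hη
          have hn1 : (0:ℝ) < (n:ℝ) + 1 := by positivity
          obtain ⟨k, hk⟩ := exists_pow_lt_of_lt_one (div_pos hη hn1) (by norm_num : (1/2:ℝ) < 1)
          have h1 := hup n k
          have h2 : ((n:ℝ) + 1) * P.dual f₀ (cs k + a * cs k) ≤ ((n:ℝ) + 1) * (1/2)^(k+1) :=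
            mul_le_mul_of_nonneg_left (hcsf k).le (by positivity)
          have h3 : ((1:ℝ)/2)^(k+1) ≤ (1/2)^k :=
            pow_le_pow_of_le_one (by norm_num) (by norm_num) (by omega)
          have h4 : ((n:ℝ) + 1) * (1/2)^k < η := by
            rw [lt_div_iff₀ hn1] at hk
            rw [mul_comm]
            exact hk
          have h5 : ((n:ℝ) + 1) * (1/2)^(k+1) ≤ ((n:ℝ)+1) * (1/2)^k :=
            mul_le_mul_of_nonneg_left h3 (by positivity)
          linarith
        refine le_antisymm ?_ (aux_dpos (N := N) (posPart_nonneg e) hy)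
        refine le_of_forall_pos_le_add ?_
        intro η hη
        obtain ⟨n, hn⟩ := exists_nat_gt (P.dual f₀ (y * y) / η)
        have h1 := hnn n
        have h2 : P.dual f₀ (y * y) / ((n:ℝ) + 1) < η := by
          rw [div_lt_iff₀ (by positivity)]
          rw [div_lt_iff₀ hη] at hn
          nlinarith
        linarith
      have hpz : e⁺ = 0 := by
        apply P.dual_inj
        rw [map_zero]
        refine LinearMap.ext fun y => ?_
        have hy1 := hzero y⁺ (posPart_nonneg y)
        have hy2 := hzero y⁻ (negPart_nonneg y)
        have hdec : y = y⁺ - y⁻ := (posPart_sub_negPart y).symm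
        rw [LinearMap.zero_apply]
        have hsplity : P.dual e⁺ y = P.dual e⁺ y⁺ - P.dual e⁺ y⁻ := by
          nth_rewrite 1 [hdec]
          rw [map_sub]
        rw [hsplity, hy1, hy2, sub_zero]
      calc e ≤ e⁺ := le_posPart e
      _ = 0 := hpz
  obtain ⟨d, hds, hdall⟩ := P.bidual_cont F s hsne hdir hglb ε hε
  have h2 : P.bidual F d < ε := lt_of_le_of_lt (le_abs_self _) (hdall d hds le_rfl)
  obtain ⟨K, hK⟩ := hds
  rw [← hK] at h2
  exact ⟨cs K, hcs0 K, hcsa K, hcsg K, h2⟩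

lemma aux_bpos {F : N} (hF : 0 ≤ F) {d : D} (hd : 0 ≤ d) : 0 ≤ P.bidual F d :=
  (P.bidual_order F).1 hF d hd

lemma aux_bmono_left {F₁ F₂ : N} (h : F₁ ≤ F₂) {d : D} (hd : 0 ≤ d) :
    P.bidual F₁ d ≤ P.bidual F₂ d := by
  have h0 : 0 ≤ F₂ - F₁ := sub_nonneg.2 h
  have := aux_bpos (A := A) h0 hd
  rw [map_sub, LinearMap.sub_apply] at this; linarith

lemma aux_bmono_right {F : N} (hF : 0 ≤ F) {d₁ d₂ : D} (h : d₁ ≤ d₂) :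
    P.bidual F d₁ ≤ P.bidual F d₂ := by
  have := aux_bpos (A := A) hF (sub_nonneg.2 h)
  rw [map_sub] at this; linarith

set_option maxHeartbeats 1000000 in
theorem stmt9' (T : D →ₗ[ℝ] D)
    (hR : ∀ f : D, {g : D | ∃ F : N, g = P.nsmul F (T f)} ⊆ {g : D | ∃ F : N, g = P.nsmul F f}) :
    ∀ f g : D, |f| ⊓ |g| = 0 → |T f| ⊓ |g| = 0 := by
  intro f g hfg
  obtain ⟨E, hE⟩ := aux_ev1 (A := A) (D := D) (N := N)
  have hTf : P.nsmul E (T f) = T f := by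
    apply P.dual_inj
    refine LinearMap.ext fun x => ?_
    rw [P.nsmul_eval, hE (P.dsmul x (T f)), P.dsmul_eval, mul_one]
  obtain ⟨G, hG⟩ := hR f ⟨E, hTf.symm⟩
  have hf₀ : (0:D) ≤ |f| := aux_abs_nonneg f
  have hg₀ : (0:D) ≤ |g| := aux_abs_nonneg g
  have hFa0 : (0:N) ≤ |G| := aux_abs_nonneg G
  have hGle : G ≤ |G| := le_sup_left
  have hGle' : -G ≤ |G| := le_sup_right
  have hfle : f ≤ |f| := le_sup_left
  have hfle' : -f ≤ |f| := le_sup_right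
  -- the two-sided bound on the dual pairing
  have hkeyb : ∀ x : A, 0 ≤ x →
      P.bidual G (P.dsmul x f) ≤ P.bidual |G| (P.dsmul x |f|)
      ∧ -(P.bidual G (P.dsmul x f)) ≤ P.bidual |G| (P.dsmul x |f|) := by
    intro x hx
    set d : D := P.dsmul x f with hd
    have hsplit : d⁺ - d⁻ = d := posPart_sub_negPart d
    have e2 : P.bidual G d⁺ ≤ P.bidual |G| d⁺ := aux_bmono_left (A := A) hGle (posPart_nonneg d)
    have e2' : -(P.bidual G d⁺) ≤ P.bidual |G| d⁺ := by
      have := aux_bmono_left (A := A) hGle' (posPart_nonneg d)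
      rwa [map_neg, LinearMap.neg_apply] at this
    have e3 : P.bidual G d⁻ ≤ P.bidual |G| d⁻ := aux_bmono_left (A := A) hGle (negPart_nonneg d)
    have e3' : -(P.bidual G d⁻) ≤ P.bidual |G| d⁻ := by
      have := aux_bmono_left (A := A) hGle' (negPart_nonneg d)
      rwa [map_neg, LinearMap.neg_apply] at this
    have e5 : d⁺ + d⁻ ≤ P.dsmul x |f| := by
      have i1 : d ≤ P.dsmul x |f| := by
        apply aux_dle (A := A) (N := N)
        intro y hy
        rw [hd, P.dsmul_eval, P.dsmul_eval]
        exact aux_dmono_left (N := N) hfle (FAlg.mul_nonneg x y hx hy)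
      have i2 : -d ≤ P.dsmul x |f| := by
        apply aux_dle (A := A) (N := N)
        intro y hy
        have l1 : P.dual (-d) y = -(P.dual f (x * y)) := by
          rw [map_neg, LinearMap.neg_apply, hd, P.dsmul_eval]
        have l2 := aux_dmono_left (N := N) hfle' (FAlg.mul_nonneg x y hx hy)
        rw [map_neg, LinearMap.neg_apply] at l2
        rw [l1, P.dsmul_eval]
        exact l2
      calc d⁺ + d⁻ = |d| := posPart_add_negPart d
      _ = d ⊔ -d := rfl
      _ ≤ P.dsmul x |f| := sup_le i1 i2
    have e6 : P.bidual |G| d⁺ + P.bidual |G| d⁻ ≤ P.bidual |G| (P.dsmul x |f|) := by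
      have := aux_bmono_right (A := A) hFa0 e5
      rwa [map_add] at this
    have e1 : P.bidual G d = P.bidual G d⁺ - P.bidual G d⁻ := by
      nth_rewrite 1 [← hsplit]
      rw [map_sub]
    constructor
    · rw [e1]; linarith
    · rw [e1]; linarith
  have h1 : P.nsmul G f ≤ P.nsmul |G| |f| := by
    apply aux_dle (A := A) (N := N)
    intro x hx
    rw [P.nsmul_eval, P.nsmul_eval]
    exact (hkeyb x hx).1
  have h2 : -(P.nsmul G f) ≤ P.nsmul |G| |f| := by
    apply aux_dle (A := A) (N := N)
    intro x hx
    rw [map_neg, LinearMap.neg_apply, P.nsmul_eval, P.nsmul_eval]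
    exact (hkeyb x hx).2
  have hub : |T f| ≤ P.nsmul |G| |f| := by
    rw [hG]
    exact sup_le h1 h2
  have hdisj := aux_rk (A := A) (N := N) hf₀ hg₀ hfg
  have hk0 : (0:D) ≤ |T f| ⊓ |g| := le_inf (aux_abs_nonneg _) hg₀
  have hkle : |T f| ⊓ |g| ≤ 0 := by
    apply aux_dle (A := A) (N := N)
    intro a ha
    have hsmall : ∀ η : ℝ, 0 < η → P.dual (|T f| ⊓ |g|) a < η := by
      intro η hη
      obtain ⟨c, hc0, hca, hgc, hFc⟩ := aux_key (A := A) (N := N) |f| |g| hf₀ hg₀ hdisj |G| a ha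
        (η/2) (η/2) (by positivity) (by positivity)
      have e0 : P.dual (|T f| ⊓ |g|) a
          = P.dual (|T f| ⊓ |g|) c + P.dual (|T f| ⊓ |g|) (a - c) := by
        have hsum : a = c + (a - c) := by abel
        nth_rewrite 1 [hsum]
        rw [map_add]
      have e1 : P.dual (|T f| ⊓ |g|) c ≤ P.bidual |G| (P.dsmul c |f|) := by
        have l1 : |T f| ⊓ |g| ≤ P.nsmul |G| |f| := le_trans inf_le_left hub
        have := aux_dmono_left (N := N) l1 hc0
        rwa [P.nsmul_eval] at this
      have e2 : P.dual (|T f| ⊓ |g|) (a - c) ≤ P.dual |g| (a - c) :=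
        aux_dmono_left (N := N) inf_le_right (sub_nonneg.2 hca)
      rw [e0]
      linarith
    have h0 : P.dual (|T f| ⊓ |g|) a ≤ 0 := by
      refine le_of_forall_pos_le_add ?_
      intro η hη
      have := hsmall η hη
      linarith
    have hz : P.dual (0:D) a = 0 := by rw [map_zero]; rfl
    linarith
  exact le_antisymm hkle hk0

end DS

variable {A : Type*} [CommRing A] [Lattice A] [Module ℝ A] [FAlg A]
variable {D : Type*} [AddCommGroup D] [Lattice D] [Module ℝ D] [RieszSp D]
variable {N : Type*} [CommRing N] [Lattice N] [Module ℝ N] [FAlg N]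
variable [P : DualSetting A D N]


/-- `R(f) = {F ⋅ f : F ∈ (A^∼)^∼_n}`, the image of `(A^∼)^∼_n` under `T_f`. -/
def Rset (N : Type*) [CommRing N] [Lattice N] [Module ℝ N] [P : DualSetting A D N]
    (f : D) : Set D := {g : D | ∃ F : N, g = P.nsmul F f}

/-- An operator on `A^∼` is order bounded if it maps order intervals into order intervals. -/
def OrderBddOp (T : D →ₗ[ℝ] D) : Prop :=
  ∀ a b : D, ∃ u v : D, ∀ x : D, a ≤ x → x ≤ b → u ≤ T x ∧ T x ≤ v

/-- A band preserving operator: it preserves disjointness. -/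
def BandPreserving (T : D →ₗ[ℝ] D) : Prop :=
  ∀ f g : D, |f| ⊓ |g| = 0 → |T f| ⊓ |g| = 0

/-- An orthomorphism is an order bounded band preserving operator. -/
def IsOrthomorphism (T : D →ₗ[ℝ] D) : Prop := OrderBddOp T ∧ BandPreserving T

/-- With the factorization property, every f-orthomorphism is an orthomorphism. -/
theorem stmt9 (hfact : ∀ a : A, ∃ b c : A, a = b * c) (T : D →ₗ[ℝ] D)
    (hT : OrderBddOp T) (hR : ∀ f : D, Rset (A := A) N (T f) ⊆ Rset (A := A) N f) :
    ∀ f g : D, |f| ⊓ |g| = 0 → |T f| ⊓ |g| = 0 := by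
  intro f g hfg
  exact stmt9' (A := A) (N := N) T (fun f' => hR f') f g hfg
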